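/- Let v be a 2-sparse sequence over [n] with no subsequence of the form 1 2 1 2 1 (two symbols alternating five times), decomposed as v = I_1 I_2 ... I_{2n} where each interval I_j consists of distinct terms. Define the hypergraph H = (E_i : i ∈ [n]) with E_i = {j ∈ [2n] : symbol i appears in I_j}. Then H does not contain the partition H_2 = ({1,3,5},{2,4}). -/

import Mathlib

/-- The set of vertices of a hypergraph given as a list of finite edges. -/
def vset (H : List (Finset ℕ)) : Finset ℕ := H.foldr (· ∪ ·) ∅

/-- The number of vertices `v(H)`. -/
def nv (H : List (Finset ℕ)) : ℕ := (vset H).card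

/-- The weight `i(H)`, the number of vertex-edge incidences. -/
def iw (H : List (Finset ℕ)) : ℕ := (H.map Finset.card).sum

/-- A hypergraph is simple if its edges are distinct (and nonempty). -/
def HSimple (H : List (Finset ℕ)) : Prop := H.Nodup ∧ ∀ E ∈ H, E.Nonempty

/-- Ordered hypergraph containment: an increasing vertex injection together with an
injective assignment of edges such that each edge of `F` maps vertex-wise into its image. -/
def HContains (H F : List (Finset ℕ)) : Prop :=
  ∃ (φ : ℕ → ℕ) (f : Fin F.length → Fin H.length),
    StrictMono φ ∧ Function.Injective f ∧
      ∀ i : Fin F.length, ∀ v ∈ F.get i, φ v ∈ H.get (f i)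

/-- `ex_e(F,n)`: max number of edges of a simple `F`-free hypergraph on at most `n` vertices. -/
noncomputable def exE (F : List (Finset ℕ)) (n : ℕ) : ℕ :=
  sSup {m | ∃ H, HSimple H ∧ ¬ HContains H F ∧ nv H ≤ n ∧ H.length = m}

/-- `ex_i(F,n)`: max weight of a simple `F`-free hypergraph on at most `n` vertices. -/
noncomputable def exI (F : List (Finset ℕ)) (n : ℕ) : ℕ :=
  sSup {m | ∃ H, HSimple H ∧ ¬ HContains H F ∧ nv H ≤ n ∧ iw H = m}

/-- A hypergraph is a graph if all edges have two vertices. -/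
def IsGraphH (H : List (Finset ℕ)) : Prop := ∀ E ∈ H, E.card = 2

/-- `gex(B,n)` for a family `B` of ordered graphs. -/
noncomputable def gexSet (B : Set (List (Finset ℕ))) (n : ℕ) : ℕ :=
  sSup {m | ∃ G, HSimple G ∧ IsGraphH G ∧ (∀ F ∈ B, ¬ HContains G F) ∧ nv G ≤ n ∧ G.length = m}

/-- `gex(F,n)` for a single ordered graph. -/
noncomputable def gex (F : List (Finset ℕ)) (n : ℕ) : ℕ := gexSet {F} n

/-- `G'` is a `k`-blow-up of `G`: every edge colouring of `G'` using each colour at most `k`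
times admits an ordered copy of `G` with pairwise distinct colours. -/
def IsBlowup (k : ℕ) (G' G : List (Finset ℕ)) : Prop :=
  ∀ χ : Fin G'.length → ℕ,
    (∀ c : ℕ, (Finset.univ.filter fun i => χ i = c).card ≤ k) →
    ∃ (φ : ℕ → ℕ) (f : Fin G.length → Fin G'.length),
      StrictMono φ ∧ Function.Injective f ∧
      (∀ i : Fin G.length, ∀ v ∈ G.get i, φ v ∈ G'.get (f i)) ∧
      Function.Injective (χ ∘ f)

/-- The hierarchy `F_1(n) = 2n`, `F_{i+1}(n) = F_i iterated n times starting at 1`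
(indexed from 0, so `Fiter i = F_{i+1}`). -/
def Fiter : ℕ → ℕ → ℕ
  | 0, n => 2 * n
  | i+1, n => (Fiter i)^[n] 1

/-- The Ackermann function `A(n) = F_n(n)`. -/
def Ack (n : ℕ) : ℕ := Fiter (n - 1) n

/-- The inverse Ackermann function `α(n) = min {m : A(m) ≥ n}`. -/
noncomputable def invAck (n : ℕ) : ℕ := sInf {m | n ≤ Ack m}

/-- The almost constant factor `β(k,l,n)` from the generalized Davenport–Schinzel bound. -/
noncomputable def DSbeta (k l n : ℕ) : ℕ :=
  k * 2 ^ (k * l - 3) * (10 * k) ^ (2 * (invAck n) ^ (k * l - 4) + 8 * (invAck n) ^ (k * l - 5))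

/-- The ordered graph `G_1 = ({1,3},{1,5},{2,3},{2,4})`. -/
def G1 : List (Finset ℕ) := [{1,3}, {1,5}, {2,3}, {2,4}]

/-- A `k`-multiple of `G_1`. -/
def IsMultiple (k : ℕ) (G : List (Finset ℕ)) : Prop :=
  HSimple G ∧ IsGraphH G ∧
  ∃ (A B C : Finset ℕ) (v : ℕ),
    A.card = k ∧ (∀ a ∈ A, a < v) ∧ (∀ b ∈ B, v < b) ∧
    (∀ b ∈ B, ∀ c ∈ C, b < c) ∧
    vset G = A ∪ {v} ∪ B ∪ C ∧
    (∀ a ∈ A, ({a, v} : Finset ℕ) ∈ G) ∧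
    (∀ a ∈ A, (B.filter fun b => ({a, b} : Finset ℕ) ∈ G).card = k) ∧
    (∀ a ∈ A, (C.filter fun c => ({a, c} : Finset ℕ) ∈ G).card = k) ∧
    (∀ E ∈ G, (∃ a ∈ A, E = {a, v}) ∨ (∃ a ∈ A, ∃ w ∈ B ∪ C, E = {a, w}))

lemma getD_drop' (l : List (List ℕ)) (i j : ℕ) : (l.drop i).getD j [] = l.getD (i+j) [] := by
  simp [List.getD_eq_getElem?_getD, List.getElem?_drop]

lemma step (Is : List (List ℕ)) (i x : ℕ) (l : List ℕ)
    (hx : x ∈ Is.getD i []) (hl : List.Sublist l ((Is.drop (i+1)).flatten)) :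
    List.Sublist (x :: l) Is.flatten := by
  have hi : i < Is.length := by
    by_contra h
    rw [List.getD_eq_default] at hx
    · simp at hx
    · omega
  have h1 : Is.flatten = (Is.take (i+1)).flatten ++ (Is.drop (i+1)).flatten := by
    rw [← List.flatten_append, List.take_append_drop]
  rw [h1]
  have hmem : x ∈ (Is.take (i+1)).flatten := by
    rw [List.mem_flatten]
    refine ⟨Is[i], ?_, ?_⟩
    · rw [List.mem_take_iff_getElem]
      exact ⟨i, by omega, by simp⟩
    · rw [List.getD_eq_getElem Is [] hi] at hx; exact hx
  have : List.Sublist ([x] ++ l) ((Is.take (i+1)).flatten ++ (Is.drop (i+1)).flatten) :=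
    List.Sublist.append (List.singleton_sublist.mpr hmem) hl
  simpa using this

lemma forall2_mono {P Q : ℕ → ℕ → Prop} {l1 l2 : List ℕ}
    (h : List.Forall₂ P l1 l2) (himp : ∀ a ∈ l1, ∀ b ∈ l2, P a b → Q a b) :
    List.Forall₂ Q l1 l2 := by
  induction h with
  | nil => exact List.Forall₂.nil
  | cons hpq _ ih =>
    exact List.Forall₂.cons (himp _ (by simp) _ (by simp) hpq)
      (ih fun a ha b hb => himp a (by simp [ha]) b (by simp [hb]))

lemma sub_of_chain : ∀ (xs js : List ℕ) (Is : List (List ℕ)),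
    js.Chain' (· < ·) → List.Forall₂ (fun j x => x ∈ Is.getD j []) js xs →
    List.Sublist xs Is.flatten := by
  intro xs
  induction xs with
  | nil => intro js Is _ h; cases h; exact List.nil_sublist _
  | cons x xs ih =>
    intro js Is hch hf
    obtain ⟨j, js', hx, hf', rfl⟩ := List.forall₂_cons_right_iff.mp hf
    have hgt : ∀ a ∈ js', j < a := by
      rw [List.Chain', List.isChain_iff_pairwise] at hch
      exact (List.pairwise_cons.mp hch).1
    apply step Is j x xs hx
    apply ih (js'.map (fun a => a - (j+1))) (Is.drop (j+1))
    · rw [List.Chain', List.isChain_iff_pairwise] at hch ⊢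
      have := (List.pairwise_cons.mp hch).2
      rw [List.pairwise_map]
      refine this.imp_of_mem ?_
      intro a b ha hb hab
      have := hgt a ha
      omega
    · rw [List.forall₂_map_left_iff]
      refine forall2_mono hf' ?_
      intro a ha b _ hab
      rw [getD_drop']
      have := hgt a ha
      have heq : j + 1 + (a - (j+1)) = a := by omega
      rw [heq]
      exact hab

/-- Let `v` be a 2-sparse sequence over `[n]` with no `ababa` pattern, decomposed as
`v = I_1 ⋯ I_{2n}` with each interval consisting of distinct terms.  The hypergraph
`H = (E_i : i ∈ [n])` with `E_i = {j ∈ [2n] : i appears in I_j}` does not contain the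
partition `H_2 = ({1,3,5},{2,4})`. -/
theorem stmt15 (n : ℕ) (v : List ℕ) (hmem : ∀ x ∈ v, x ∈ Finset.Icc 1 n)
    (hsp : v.Chain' (· ≠ ·))
    (hno : ¬ ∃ a b : ℕ, a ≠ b ∧ [a, b, a, b, a].Sublist v)
    (Is : List (List ℕ)) (hj : Is.flatten = v) (hl : Is.length = 2 * n)
    (hnd : ∀ I ∈ Is, I.Nodup)
    (H : List (Finset ℕ))
    (hH : H = (List.range n).map fun i =>
      (Finset.Icc 1 (2 * n)).filter fun j => i + 1 ∈ Is.getD (j - 1) []) :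
    ¬ HContains H [({1, 3, 5} : Finset ℕ), {2, 4}] := by
  subst hH
  subst hj
  rintro ⟨φ, f, hmono, hinj, hget⟩
  have h0 := hget ⟨0, by norm_num⟩
  have h1 := hget ⟨1, by norm_num⟩
  simp only [List.get_eq_getElem, List.getElem_map, List.getElem_range] at h0 h1
  set a : ℕ := (f ⟨0, by norm_num⟩ : Fin _).val with ha
  set b : ℕ := (f ⟨1, by norm_num⟩ : Fin _).val with hb
  have hab : a ≠ b := by
    intro h
    have : f ⟨0, by norm_num⟩ = f ⟨1, by norm_num⟩ := Fin.val_injective h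
    have := hinj this
    simp at this
  have g1 := h0 1 (by decide)
  have g3 := h0 3 (by decide)
  have g5 := h0 5 (by decide)
  have g2 := h1 2 (by decide)
  have g4 := h1 4 (by decide)
  rw [Finset.mem_filter, Finset.mem_Icc] at g1 g2 g3 g4 g5
  have m12 : φ 1 < φ 2 := hmono (by norm_num)
  have m23 : φ 2 < φ 3 := hmono (by norm_num)
  have m34 : φ 3 < φ 4 := hmono (by norm_num)
  have m45 : φ 4 < φ 5 := hmono (by norm_num)
  have key : List.Sublist [a+1, b+1, a+1, b+1, a+1] Is.flatten := by
    apply sub_of_chain _ [φ 1 - 1, φ 2 - 1, φ 3 - 1, φ 4 - 1, φ 5 - 1] Is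
    · simp only [List.Chain', List.isChain_cons_cons, List.isChain_singleton, and_true]
      obtain ⟨⟨hg, _⟩, _⟩ := g1
      refine ⟨by omega, by omega, by omega, by omega⟩
    · exact List.Forall₂.cons g1.2 (List.Forall₂.cons g2.2 (List.Forall₂.cons g3.2
        (List.Forall₂.cons g4.2 (List.Forall₂.cons g5.2 List.Forall₂.nil))))
  exact hno ⟨a+1, b+1, by omega, key⟩
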